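/- Let H_m (m ≥ 4) be the 4-graph on Z/m × (Z/2)⁶ defined in Section 7. If A is an independent set of vertices in H_m, then |A| ≤ 2m + Σ_{i∈Z/m} χ[A₁(i) ≠ ∅]. In particular, α(H_m) ≤ 3m, and removing all vertices at any level i∈Z/m decreases this bound by 1 per level removed. -/

import Mathlib

open Finset

abbrev G2 := ZMod 2 × ZMod 2

/-- Vertices of the 4-graph `H_m`: elements `(i, x, y, z)` of `ℤ/m ⊕ (ℤ/2)⁶`. -/
abbrev HVtx (m : ℕ) := ZMod m × G2 × G2 × G2

/-- Edge predicate of the 4-graph `H_m` on `ℤ/m ⊕ (ℤ/2)⁶` (edge types 1, 2, 3,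
4a, 4b, 4c of Section 7). -/
def IsHmEdge {m : ℕ} (e : Finset (HVtx m)) : Prop :=
  e.card = 4 ∧ (
  -- type 1
  (∃ (i : ZMod m) (x y : G2) (z₁ z₂ z₃ z₄ : G2),
     e = {(i, x, y, z₁), (i, x, y, z₂), (i, x, y, z₃), (i, x, y, z₄)}) ∨
  -- type 2
  (∃ (i : ZMod m) (x₁ y₁ z₁ x₂ y₂ z₂ x₃ y₃ z₃ x₄ y₄ z₄ : G2),
     x₁ + x₂ + x₃ + x₄ = 0 ∧
     (x₁, y₁) ≠ (x₂, y₂) ∧ (x₁, y₁) ≠ (x₃, y₃) ∧ (x₁, y₁) ≠ (x₄, y₄) ∧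
     (x₂, y₂) ≠ (x₃, y₃) ∧ (x₂, y₂) ≠ (x₄, y₄) ∧ (x₃, y₃) ≠ (x₄, y₄) ∧
     e = {(i, x₁, y₁, z₁), (i, x₂, y₂, z₂), (i, x₃, y₃, z₃), (i, x₄, y₄, z₄)}) ∨
  -- type 3
  (∃ (i : ZMod m) (x₁ y₁' z₁' y₁'' z₁'' x₂' y₂' z₂' x₂'' y₂'' z₂'' : G2),
     y₁' ≠ y₁'' ∧ y₁' + y₁'' + x₂' + x₂'' = 0 ∧
     e = {(i, x₁, y₁', z₁'), (i, x₁, y₁'', z₁''),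
          (i + 1, x₂', y₂', z₂'), (i + 1, x₂'', y₂'', z₂'')}) ∨
  -- type 4a
  (∃ (i : ZMod m) (x₁ y₁ z₁' z₁'' x₂ y₂ z₂' z₂'' : G2),
     z₁' ≠ z₁'' ∧ z₂' ≠ z₂'' ∧ (x₁, y₁) ≠ (x₂, y₂) ∧
     e = {(i, x₁, y₁, z₁'), (i, x₁, y₁, z₁''),
          (i, x₂, y₂, z₂'), (i, x₂, y₂, z₂'')}) ∨
  -- type 4b
  (∃ (i : ZMod m) (x₁ y₁ z₁' z₁'' x₂ y₂' z₂' y₂'' z₂'' : G2),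
     z₁' ≠ z₁'' ∧ y₂' ≠ y₂'' ∧
     e = {(i, x₁, y₁, z₁'), (i, x₁, y₁, z₁''),
          (i + 2, x₂, y₂', z₂'), (i + 2, x₂, y₂'', z₂'')}) ∨
  -- type 4c
  (∃ (i : ZMod m) (x₁ y₁ z₁' z₁'' x₂' y₂' z₂' x₂'' y₂'' z₂'' : G2),
     z₁' ≠ z₁'' ∧ z₁' + z₁'' + x₂' + x₂'' = 0 ∧
     e = {(i, x₁, y₁, z₁'), (i, x₁, y₁, z₁''),
          (i + 3, x₂', y₂', z₂'), (i + 3, x₂'', y₂'', z₂'')}))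

/-- `A₃(i,x,y) = { z : (i,x,y,z) ∈ A }`. -/
def A3 {m : ℕ} (A : Finset (HVtx m)) (i : ZMod m) (x y : G2) : Finset G2 :=
  Finset.univ.filter fun z => (i, x, y, z) ∈ A

/-- `A₂(i,x) = { y : ∃ z, (i,x,y,z) ∈ A }`. -/
def A2 {m : ℕ} (A : Finset (HVtx m)) (i : ZMod m) (x : G2) : Finset G2 :=
  Finset.univ.filter fun y => ∃ z, (i, x, y, z) ∈ A

/-- `A₁(i) = { x : ∃ y z, (i,x,y,z) ∈ A }`. -/
def A1 {m : ℕ} (A : Finset (HVtx m)) (i : ZMod m) : Finset G2 :=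
  Finset.univ.filter fun x => (Finset.univ.filter fun y : G2 => (A3 A i x y).Nonempty).Nonempty

/-- `εᵢ(A) = ∑_{x,y} max{0, |A₃(i,x,y)| - 1}` (note `t - 1 = max{0, t-1}` in `ℕ`). -/
def epsi {m : ℕ} (A : Finset (HVtx m)) (i : ZMod m) : ℕ :=
  ∑ x : G2, ∑ y : G2, ((A3 A i x y).card - 1)

section Aux
variable {m : ℕ}

-- decidable G2 facts
lemma g2_add_self : ∀ a : G2, a + a = 0 := by decide
lemma g2_pair_sum : ∀ d : G2, d ≠ 0 → ∀ T : Finset G2, 3 ≤ T.card →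
    ∃ a ∈ T, ∃ b ∈ T, a ≠ b ∧ a + b = d := by decide
lemma g2_ne_sum_ne : ∀ a b : G2, a ≠ b → a + b ≠ 0 := by decide
lemma g2_sum_eq : ∀ a b c d : G2, c + d = a + b → a + b + c + d = 0 := by decide
lemma g2_univ_sum : ((0,0) : G2) + (0,1) + (1,0) + (1,1) = 0 := by decide

lemma card_four {α : Type*} [DecidableEq α] {a b c d : α}
    (h1 : a ≠ b) (h2 : a ≠ c) (h3 : a ≠ d) (h4 : b ≠ c) (h5 : b ≠ d) (h6 : c ≠ d) :
    ({a, b, c, d} : Finset α).card = 4 := by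
  rw [Finset.card_insert_of_notMem (by simp [h1, h2, h3]),
      Finset.card_insert_of_notMem (by simp [h4, h5]),
      Finset.card_insert_of_notMem (by simp [h6]), Finset.card_singleton]

lemma mem_A3' {A : Finset (HVtx m)} {i x y z} : z ∈ A3 A i x y ↔ (i,x,y,z) ∈ A := by
  simp [A3]
lemma mem_A2' {A : Finset (HVtx m)} {i x y} : y ∈ A2 A i x ↔ ∃ z, (i,x,y,z) ∈ A := by
  simp [A2]
lemma mem_A1' {A : Finset (HVtx m)} {i x} : x ∈ A1 A i ↔ ∃ y z, (i,x,y,z) ∈ A := by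
  simp only [A1, Finset.mem_filter, Finset.mem_univ, true_and]
  simp [Finset.Nonempty, mem_A3']

lemma zmod_shift_ne [NeZero m] (hm : 4 ≤ m) (i : ZMod m) (k : ℕ) (h1 : 1 ≤ k) (h2 : k ≤ 3) :
    i + (k : ZMod m) ≠ i := by
  intro h
  have hk : (k : ZMod m) = 0 := by
    have := congrArg (fun t => t - i) h
    simpa [add_comm, add_sub_cancel_right] using this
  rw [ZMod.natCast_eq_zero_iff] at hk
  have := Nat.le_of_dvd (by omega) hk
  omega

end Aux
set_option linter.unusedSectionVars false

section Edges
variable {m : ℕ} [NeZero m] {A : Finset (HVtx m)}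
  (hA : ∀ e : Finset (HVtx m), IsHmEdge e → ¬ e ⊆ A)

lemma ne01 : ((0,0):G2) ≠ (0,1) := by decide
lemma ne02 : ((0,0):G2) ≠ (1,0) := by decide
lemma ne03 : ((0,0):G2) ≠ (1,1) := by decide
lemma ne12 : ((0,1):G2) ≠ (1,0) := by decide
lemma ne13 : ((0,1):G2) ≠ (1,1) := by decide
lemma ne23 : ((1,0):G2) ≠ (1,1) := by decide

lemma vne_last {i : ZMod m} {x y z z' : G2} (h : z ≠ z') :
    ((i,x,y,z) : HVtx m) ≠ (i,x,y,z') := by simp [h]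

lemma vne_pair {i : ZMod m} {x y x' y' z z' : G2} (h : (x,y) ≠ (x',y')) :
    ((i,x,y,z) : HVtx m) ≠ (i,x',y',z') := by
  simp only [ne_eq, Prod.mk.injEq, not_and] at h ⊢
  intro _ hx hy _; exact h hx hy

lemma vne_level {i j : ZMod m} {x y z x' y' z' : G2} (h : i ≠ j) :
    ((i,x,y,z) : HVtx m) ≠ (j,x',y',z') := by
  simp only [ne_eq, Prod.mk.injEq, not_and]; intro hij; exact absurd hij h

lemma pair_ne_fst {x x' : G2} (h : x ≠ x') (y y' : G2) : ((x,y) : G2 × G2) ≠ (x',y') := by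
  simp [h]

lemma pair_ne_snd {y y' : G2} (h : y ≠ y') (x : G2) : ((x,y) : G2 × G2) ≠ (x,y') := by
  simp [h]

lemma vne_y {i : ZMod m} {x y y' z z' : G2} (h : y ≠ y') :
    ((i,x,y,z) : HVtx m) ≠ (i,x,y',z') := vne_pair (pair_ne_snd h x)

lemma vne_x {i : ZMod m} {x x' y y' z z' : G2} (h : x ≠ x') :
    ((i,x,y,z) : HVtx m) ≠ (i,x',y',z') := vne_pair (pair_ne_fst h y y')

lemma shiftk (hm : 4 ≤ m) (i : ZMod m) (k : ℕ) (h1 : 1 ≤ k) (h2 : k ≤ 3) :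
    i ≠ i + (k : ZMod m) := by
  intro h
  have hk : (k : ZMod m) = 0 := by
    have := congrArg (fun t => t - i) h
    simpa [add_comm, add_sub_cancel_right] using this.symm
  rw [ZMod.natCast_eq_zero_iff] at hk
  have := Nat.le_of_dvd (by omega) hk
  omega

lemma subset4 {a b c d : HVtx m} (ha : a ∈ A) (hb : b ∈ A) (hc : c ∈ A) (hd : d ∈ A) :
    ({a,b,c,d} : Finset (HVtx m)) ⊆ A := by
  intro v hv
  simp only [Finset.mem_insert, Finset.mem_singleton] at hv
  rcases hv with h|h|h|h <;> subst h <;> assumption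

include hA

/-- type 1 -/
lemma A3card_le3 (i : ZMod m) (x y : G2) : (A3 A i x y).card ≤ 3 := by
  by_contra h
  push_neg at h
  have hu : A3 A i x y = Finset.univ :=
    Finset.eq_univ_of_card _ (le_antisymm (Finset.card_le_univ _) (by simp only [Fintype.card_prod, ZMod.card]; omega))
  have hz : ∀ z : G2, (i,x,y,z) ∈ A := fun z => mem_A3'.mp (hu ▸ Finset.mem_univ z)
  refine hA {(i,x,y,(0,0)), (i,x,y,(0,1)), (i,x,y,(1,0)), (i,x,y,(1,1))}
    ⟨card_four (vne_last ne01) (vne_last ne02) (vne_last ne03)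
      (vne_last ne12) (vne_last ne13) (vne_last ne23),
      Or.inl ⟨i, x, y, _, _, _, _, rfl⟩⟩
    (subset4 (hz _) (hz _) (hz _) (hz _))

/-- type 2, four y's on one x -/
lemma A2card_le3 (i : ZMod m) (x : G2) : (A2 A i x).card ≤ 3 := by
  by_contra h
  push_neg at h
  have hu : A2 A i x = Finset.univ :=
    Finset.eq_univ_of_card _ (le_antisymm (Finset.card_le_univ _) (by simp only [Fintype.card_prod, ZMod.card]; omega))
  have hy : ∀ y : G2, ∃ z, (i,x,y,z) ∈ A := fun y => mem_A2'.mp (hu ▸ Finset.mem_univ y)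
  obtain ⟨z1, h1⟩ := hy (0,0); obtain ⟨z2, h2⟩ := hy (0,1)
  obtain ⟨z3, h3⟩ := hy (1,0); obtain ⟨z4, h4⟩ := hy (1,1)
  refine hA {(i,x,(0,0),z1), (i,x,(0,1),z2), (i,x,(1,0),z3), (i,x,(1,1),z4)}
    ⟨card_four (vne_y ne01) (vne_y ne02) (vne_y ne03) (vne_y ne12) (vne_y ne13) (vne_y ne23),
      Or.inr (Or.inl ⟨i, x, _, z1, x, _, z2, x, _, z3, x, _, z4,
        by rw [g2_add_self, zero_add, g2_add_self],
        pair_ne_snd ne01 x, pair_ne_snd ne02 x, pair_ne_snd ne03 x,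
        pair_ne_snd ne12 x, pair_ne_snd ne13 x, pair_ne_snd ne23 x,
        rfl⟩)⟩
    (subset4 h1 h2 h3 h4)

/-- type 2, four distinct x's -/
lemma A1card_le3 (i : ZMod m) : (A1 A i).card ≤ 3 := by
  by_contra h
  push_neg at h
  have hu : A1 A i = Finset.univ :=
    Finset.eq_univ_of_card _ (le_antisymm (Finset.card_le_univ _) (by simp only [Fintype.card_prod, ZMod.card]; omega))
  have hx : ∀ x : G2, ∃ y z, (i,x,y,z) ∈ A := fun x => mem_A1'.mp (hu ▸ Finset.mem_univ x)
  obtain ⟨y1, z1, h1⟩ := hx (0,0); obtain ⟨y2, z2, h2⟩ := hx (0,1)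
  obtain ⟨y3, z3, h3⟩ := hx (1,0); obtain ⟨y4, z4, h4⟩ := hx (1,1)
  refine hA {(i,(0,0),y1,z1), (i,(0,1),y2,z2), (i,(1,0),y3,z3), (i,(1,1),y4,z4)}
    ⟨card_four (vne_x ne01) (vne_x ne02) (vne_x ne03) (vne_x ne12) (vne_x ne13) (vne_x ne23),
      Or.inr (Or.inl ⟨i, _, y1, z1, _, y2, z2, _, y3, z3, _, y4, z4,
        g2_univ_sum,
        pair_ne_fst ne01 _ _, pair_ne_fst ne02 _ _, pair_ne_fst ne03 _ _,
        pair_ne_fst ne12 _ _, pair_ne_fst ne13 _ _, pair_ne_fst ne23 _ _,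
        rfl⟩)⟩
    (subset4 h1 h2 h3 h4)

/-- type 2, two heavy x's -/
lemma A2_unique_heavy (i : ZMod m) {x x' : G2} (hxx : x ≠ x')
    (h1 : 2 ≤ (A2 A i x).card) (h2 : 2 ≤ (A2 A i x').card) : False := by
  obtain ⟨ya, hya, yb, hyb, hab⟩ := Finset.one_lt_card.mp h1
  obtain ⟨yc, hyc, yd, hyd, hcd⟩ := Finset.one_lt_card.mp h2
  obtain ⟨za, ha⟩ := mem_A2'.mp hya
  obtain ⟨zb, hb⟩ := mem_A2'.mp hyb
  obtain ⟨zc, hc⟩ := mem_A2'.mp hyc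
  obtain ⟨zd, hd⟩ := mem_A2'.mp hyd
  refine hA {(i,x,ya,za), (i,x,yb,zb), (i,x',yc,zc), (i,x',yd,zd)}
    ⟨card_four (vne_y hab) (vne_x hxx) (vne_x hxx) (vne_x hxx) (vne_x hxx) (vne_y hcd),
      Or.inr (Or.inl ⟨i, x, ya, za, x, yb, zb, x', yc, zc, x', yd, zd,
        by rw [g2_add_self, zero_add, g2_add_self],
        pair_ne_snd hab x, pair_ne_fst hxx _ _, pair_ne_fst hxx _ _,
        pair_ne_fst hxx _ _, pair_ne_fst hxx _ _, pair_ne_snd hcd x',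
        rfl⟩)⟩
    (subset4 ha hb hc hd)

/-- type 3 -/
lemma type3_block (hm : 4 ≤ m) (i : ZMod m) {x ya yb p q : G2}
    (hya : ya ∈ A2 A i x) (hyb : yb ∈ A2 A i x) (hab : ya ≠ yb)
    (hp : p ∈ A1 A (i+1)) (hq : q ∈ A1 A (i+1)) (hpq : p ≠ q)
    (hsum : p + q = ya + yb) : False := by
  obtain ⟨za, ha⟩ := mem_A2'.mp hya
  obtain ⟨zb, hb⟩ := mem_A2'.mp hyb
  obtain ⟨yc, zc, hc⟩ := mem_A1'.mp hp
  obtain ⟨yd, zd, hd⟩ := mem_A1'.mp hq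
  have hil : i ≠ i + 1 := by simpa using shiftk hm i 1 (by norm_num) (by norm_num)
  refine hA {(i,x,ya,za), (i,x,yb,zb), (i+1,p,yc,zc), (i+1,q,yd,zd)}
    ⟨card_four (vne_y hab) (vne_level hil) (vne_level hil)
      (vne_level hil) (vne_level hil) (vne_x hpq),
      Or.inr (Or.inr (Or.inl ⟨i, x, ya, za, yb, zb, p, yc, zc, q, yd, zd,
        hab, g2_sum_eq _ _ _ _ hsum, rfl⟩))⟩
    (subset4 ha hb hc hd)

/-- type 4a -/
lemma unique_heavy_pair (i : ZMod m) {x y x' y' : G2} (hne : (x,y) ≠ (x',y'))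
    (h1 : 2 ≤ (A3 A i x y).card) (h2 : 2 ≤ (A3 A i x' y').card) : False := by
  obtain ⟨za, hza, zb, hzb, hab⟩ := Finset.one_lt_card.mp h1
  obtain ⟨zc, hzc, zd, hzd, hcd⟩ := Finset.one_lt_card.mp h2
  refine hA {(i,x,y,za), (i,x,y,zb), (i,x',y',zc), (i,x',y',zd)}
    ⟨card_four (vne_last hab) (vne_pair hne) (vne_pair hne) (vne_pair hne) (vne_pair hne)
      (vne_last hcd),
      Or.inr (Or.inr (Or.inr (Or.inl ⟨i, x, y, za, zb, x', y', zc, zd, hab, hcd, hne, rfl⟩)))⟩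
    (subset4 (mem_A3'.mp hza) (mem_A3'.mp hzb) (mem_A3'.mp hzc) (mem_A3'.mp hzd))

/-- type 4b -/
lemma type4b_block (hm : 4 ≤ m) (i : ZMod m) {x y x2 : G2}
    (h1 : 2 ≤ (A3 A i x y).card) (h2 : 2 ≤ (A2 A (i+2) x2).card) : False := by
  obtain ⟨za, hza, zb, hzb, hab⟩ := Finset.one_lt_card.mp h1
  obtain ⟨yc, hyc, yd, hyd, hcd⟩ := Finset.one_lt_card.mp h2
  obtain ⟨zc, hc⟩ := mem_A2'.mp hyc
  obtain ⟨zd, hd⟩ := mem_A2'.mp hyd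
  have hil : i ≠ i + 2 := by
    have := shiftk hm i 2 (by norm_num) (by norm_num)
    simpa using this
  refine hA {(i,x,y,za), (i,x,y,zb), (i+2,x2,yc,zc), (i+2,x2,yd,zd)}
    ⟨card_four (vne_last hab) (vne_level hil) (vne_level hil) (vne_level hil) (vne_level hil)
      (vne_y hcd),
      Or.inr (Or.inr (Or.inr (Or.inr (Or.inl
        ⟨i, x, y, za, zb, x2, yc, zc, yd, zd, hab, hcd, rfl⟩))))⟩
    (subset4 (mem_A3'.mp hza) (mem_A3'.mp hzb) hc hd)

/-- type 4c -/
lemma type4c_block (hm : 4 ≤ m) (i : ZMod m) {x y za zb p q : G2}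
    (hza : za ∈ A3 A i x y) (hzb : zb ∈ A3 A i x y) (hab : za ≠ zb)
    (hp : p ∈ A1 A (i+3)) (hq : q ∈ A1 A (i+3)) (hpq : p ≠ q)
    (hsum : p + q = za + zb) : False := by
  obtain ⟨yc, zc, hc⟩ := mem_A1'.mp hp
  obtain ⟨yd, zd, hd⟩ := mem_A1'.mp hq
  have hil : i ≠ i + 3 := by
    have := shiftk hm i 3 (by norm_num) (by norm_num)
    simpa using this
  refine hA {(i,x,y,za), (i,x,y,zb), (i+3,p,yc,zc), (i+3,q,yd,zd)}
    ⟨card_four (vne_last hab) (vne_level hil) (vne_level hil) (vne_level hil) (vne_level hil)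
      (vne_x hpq),
      Or.inr (Or.inr (Or.inr (Or.inr (Or.inr
        ⟨i, x, y, za, zb, p, yc, zc, q, yd, zd, hab, g2_sum_eq _ _ _ _ hsum, rfl⟩))))⟩
    (subset4 (mem_A3'.mp hza) (mem_A3'.mp hzb) hc hd)

end Edges
section Struct
variable {m : ℕ} [NeZero m] {A : Finset (HVtx m)}
  (hA : ∀ e : Finset (HVtx m), IsHmEdge e → ¬ e ⊆ A)

def lvA (A : Finset (HVtx m)) (i : ZMod m) : ℕ := ∑ x : G2, (A2 A i x).card
def lvU (A : Finset (HVtx m)) (i : ZMod m) : ℕ :=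
  (Finset.univ.sup fun x : G2 => (A2 A i x).card) - 1
def lvV (A : Finset (HVtx m)) (i : ZMod m) : ℕ := (A1 A i).card - 1
def lvN (A : Finset (HVtx m)) (i : ZMod m) : ℕ := if (A1 A i).Nonempty then 1 else 0

lemma mem_A1_iff_A2 {i : ZMod m} {x : G2} : x ∈ A1 A i ↔ (A2 A i x).Nonempty := by
  simp [mem_A1', A2, Finset.Nonempty]

include hA

lemma eps_struct (i : ZMod m) :
    epsi A i ≤ 2 ∧ (1 ≤ epsi A i → ∃ x y, 2 ≤ (A3 A i x y).card) ∧
      (epsi A i = 2 → ∃ x y, 3 ≤ (A3 A i x y).card) := by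
  have hE : epsi A i = ∑ p : G2 × G2, ((A3 A i p.1 p.2).card - 1) := by
    rw [epsi]; exact (Fintype.sum_prod_type (fun p : G2 × G2 => (A3 A i p.1 p.2).card - 1)).symm
  have hP1 : (Finset.univ.filter fun p : G2 × G2 => (A3 A i p.1 p.2).card - 1 ≠ 0).card ≤ 1 := by
    rw [Finset.card_le_one]
    intro p hp q hq
    simp only [Finset.mem_filter] at hp hq
    by_contra hne
    have hpq : (p.1, p.2) ≠ (q.1, q.2) := by simpa using hne
    exact unique_heavy_pair hA i hpq (by omega) (by omega)
  have hsum : epsi A i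
      = ∑ p ∈ Finset.univ.filter fun p : G2 × G2 => (A3 A i p.1 p.2).card - 1 ≠ 0,
        ((A3 A i p.1 p.2).card - 1) := by
    rw [hE, Finset.sum_filter_ne_zero]
  rcases (Finset.univ.filter fun p : G2 × G2 => (A3 A i p.1 p.2).card - 1 ≠ 0).eq_empty_or_nonempty
    with hP | ⟨p, hp⟩
  · rw [hP, Finset.sum_empty] at hsum
    refine ⟨by omega, by omega, by omega⟩
  · have hPs : (Finset.univ.filter fun p : G2 × G2 => (A3 A i p.1 p.2).card - 1 ≠ 0) = {p} :=
      Finset.eq_singleton_iff_unique_mem.mpr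
        ⟨hp, fun q hq => Finset.card_le_one.mp hP1 q hq p hp⟩
    rw [hPs, Finset.sum_singleton] at hsum
    have h3 := A3card_le3 hA i p.1 p.2
    have h2 : 2 ≤ (A3 A i p.1 p.2).card := by
      simp only [Finset.mem_filter] at hp; omega
    exact ⟨by omega, fun _ => ⟨p.1, p.2, h2⟩, fun he => ⟨p.1, p.2, by omega⟩⟩

lemma uv_bound (hm : 4 ≤ m) (j : ZMod m) : lvU A j + lvV A (j+1) ≤ 2 := by
  have hv : (A1 A (j+1)).card ≤ 3 := A1card_le3 hA (j+1)
  have hs3 : (Finset.univ.sup fun x : G2 => (A2 A j x).card) ≤ 3 :=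
    Finset.sup_le fun x _ => A2card_le3 hA j x
  by_cases hs : (Finset.univ.sup fun x : G2 => (A2 A j x).card) ≤ 1
  · have : lvU A j = 0 := by rw [lvU]; omega
    rw [this, lvV]; omega
  · push_neg at hs
    obtain ⟨x₀, -, hx₀⟩ := Finset.exists_mem_eq_sup Finset.univ Finset.univ_nonempty
      (fun x : G2 => (A2 A j x).card)
    have hc2 : 2 ≤ (A2 A j x₀).card := by omega
    obtain ⟨ya, hya, yb, hyb, hab⟩ := Finset.one_lt_card.mp hc2
    by_cases hs2 : (Finset.univ.sup fun x : G2 => (A2 A j x).card) = 2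
    · have hvle : (A1 A (j+1)).card ≤ 2 := by
        by_contra hcon
        push_neg at hcon
        have hd : ya + yb ≠ 0 := g2_ne_sum_ne ya yb hab
        obtain ⟨p, hp, q, hq, hpq, hpqsum⟩ := g2_pair_sum (ya + yb) hd (A1 A (j+1)) hcon
        exact type3_block hA hm j hya hyb hab hp hq hpq hpqsum
      rw [lvU, lvV]; omega
    · -- sup = 3
      have hvle : (A1 A (j+1)).card ≤ 1 := by
        by_contra hcon
        push_neg at hcon
        obtain ⟨p, hp, q, hq, hpq⟩ := Finset.one_lt_card.mp hcon
        have hd : p + q ≠ 0 := g2_ne_sum_ne p q hpq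
        have hc3 : 3 ≤ (A2 A j x₀).card := by omega
        obtain ⟨ya', hya', yb', hyb', hab', habsum⟩ := g2_pair_sum (p + q) hd (A2 A j x₀) hc3
        exact type3_block hA hm j hya' hyb' hab' hp hq hpq habsum.symm
      rw [lvU, lvV]; omega

lemma window (hm : 4 ≤ m) (i : ZMod m) :
    lvU A (i+2) + lvV A (i+3) + epsi A i ≤ 2 := by
  obtain ⟨he2, he1, heq2⟩ := eps_struct hA i
  by_cases he : epsi A i = 0
  · have h23 : (i+2) + 1 = i + 3 := by ring
    have := uv_bound hA hm (i+2)
    rw [h23] at this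
    omega
  · obtain ⟨x, y, hxy2⟩ := he1 (by omega)
    have hu0 : lvU A (i+2) = 0 := by
      have : (Finset.univ.sup fun x2 : G2 => (A2 A (i+2) x2).card) ≤ 1 :=
        Finset.sup_le fun x2 _ => by
          by_contra hcon
          exact type4b_block hA hm i hxy2 (show 2 ≤ (A2 A (i+2) x2).card by omega)
      rw [lvU]; omega
    by_cases he2' : epsi A i = 2
    · obtain ⟨x', y', h3c⟩ := heq2 he2'
      have hvle : (A1 A (i+3)).card ≤ 1 := by
        by_contra hcon
        push_neg at hcon
        obtain ⟨p, hp, q, hq, hpq⟩ := Finset.one_lt_card.mp hcon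
        have hd : p + q ≠ 0 := g2_ne_sum_ne p q hpq
        obtain ⟨za, hza, zb, hzb, hzab, hzsum⟩ := g2_pair_sum (p + q) hd (A3 A i x' y') h3c
        exact type4c_block hA hm i hza hzb hzab hp hq hpq hzsum.symm
      rw [lvV]; omega
    · -- epsi = 1
      have hvle : (A1 A (i+3)).card ≤ 2 := by
        by_contra hcon
        push_neg at hcon
        obtain ⟨za, hza, zb, hzb, hzab⟩ := Finset.one_lt_card.mp hxy2
        have hd : za + zb ≠ 0 := g2_ne_sum_ne za zb hzab
        obtain ⟨p, hp, q, hq, hpq, hpqsum⟩ := g2_pair_sum (za + zb) hd (A1 A (i+3)) hcon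
        exact type4c_block hA hm i hza hzb hzab hp hq hpq hpqsum
      rw [lvV]; omega

lemma lev_bound (i : ZMod m) : lvA A i ≤ lvN A i + lvU A i + lvV A i := by
  rcases (A1 A i).eq_empty_or_nonempty with hX | hX
  · have : ∀ x : G2, (A2 A i x).card = 0 := by
      intro x
      rw [Finset.card_eq_zero]
      by_contra hne
      have : x ∈ A1 A i := mem_A1_iff_A2.mpr (Finset.nonempty_iff_ne_empty.mpr hne)
      rw [hX] at this
      exact absurd this (Finset.notMem_empty x)
    rw [lvA, Finset.sum_congr rfl fun x _ => this x]
    simp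
  · have hN : lvN A i = 1 := if_pos hX
    have hcard1 : 1 ≤ (A1 A i).card := hX.card_pos
    have hAa : lvA A i = ∑ x ∈ A1 A i, (A2 A i x).card := by
      rw [lvA]
      refine (Finset.sum_subset (Finset.subset_univ _) ?_).symm
      intro x _ hx
      rw [Finset.card_eq_zero]
      by_contra hne
      exact hx (mem_A1_iff_A2.mpr (Finset.nonempty_iff_ne_empty.mpr hne))
    by_cases hh : ∃ x₀ ∈ A1 A i, 2 ≤ (A2 A i x₀).card
    · obtain ⟨x₀, hx₀, h2⟩ := hh
      have hsup : (A2 A i x₀).card ≤ (Finset.univ.sup fun x : G2 => (A2 A i x).card) :=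
        Finset.le_sup (f := fun x : G2 => (A2 A i x).card) (Finset.mem_univ x₀)
      have herase : ∑ x ∈ (A1 A i).erase x₀, (A2 A i x).card ≤ ((A1 A i).erase x₀).card := by
        have := Finset.sum_le_card_nsmul ((A1 A i).erase x₀) (fun x => (A2 A i x).card) 1 ?_
        · simpa using this
        · intro x hx
          show (A2 A i x).card ≤ 1
          by_contra hcon
          exact A2_unique_heavy hA i (Finset.ne_of_mem_erase hx) (by omega) h2
      have hsplit : (A2 A i x₀).card + ∑ x ∈ (A1 A i).erase x₀, (A2 A i x).card
          = ∑ x ∈ A1 A i, (A2 A i x).card := Finset.add_sum_erase _ (fun x => (A2 A i x).card) hx₀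
      have hec : ((A1 A i).erase x₀).card = (A1 A i).card - 1 :=
        Finset.card_erase_of_mem hx₀
      rw [hAa, ← hsplit, hN, lvU, lvV]
      omega
    · push_neg at hh
      have : ∑ x ∈ A1 A i, (A2 A i x).card ≤ (A1 A i).card := by
        have := Finset.sum_le_card_nsmul (A1 A i) (fun x => (A2 A i x).card) 1
          (fun x hx => by have := hh x hx; show (A2 A i x).card ≤ 1; omega)
        simpa using this
      rw [hAa, hN, lvV]
      omega

end Struct
section Count
variable {m : ℕ} [NeZero m] {A : Finset (HVtx m)}

lemma A2card_eq_sum_min (i : ZMod m) (x : G2) :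
    (A2 A i x).card = ∑ y : G2, min 1 (A3 A i x y).card := by
  rw [A2, Finset.card_filter]
  refine Finset.sum_congr rfl fun y _ => ?_
  by_cases hz : ∃ z, (i,x,y,z) ∈ A
  · rw [if_pos hz]
    obtain ⟨z, hzmem⟩ := hz
    have : 0 < (A3 A i x y).card := Finset.card_pos.mpr ⟨z, mem_A3'.mpr hzmem⟩
    omega
  · rw [if_neg hz]
    have : A3 A i x y = ∅ :=
      Finset.filter_eq_empty_iff.mpr (fun z _ hmem => hz ⟨z, hmem⟩)
    rw [this]
    simp

lemma count_levels : A.card = ∑ i : ZMod m, (epsi A i + lvA A i) := by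
  have hc : A.card = ∑ v : HVtx m, if v ∈ A then 1 else 0 := by
    rw [← Finset.card_filter]
    congr 1
    exact (Finset.filter_univ_mem A).symm
  rw [hc, Fintype.sum_prod_type]
  refine Finset.sum_congr rfl fun i _ => ?_
  rw [Fintype.sum_prod_type]
  have hxy : ∀ x y : G2, (∑ z : G2, if (i,x,y,z) ∈ A then 1 else 0) = (A3 A i x y).card := by
    intro x y
    rw [A3, Finset.card_filter]
  calc ∑ x : G2, ∑ p : G2 × G2, (if (i,x,p.1,p.2) ∈ A then 1 else 0)
      = ∑ x : G2, ∑ y : G2, ∑ z : G2, (if (i,x,y,z) ∈ A then 1 else 0) := by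
        refine Finset.sum_congr rfl fun x _ => ?_
        exact Fintype.sum_prod_type (fun p : G2 × G2 => if (i,x,p.1,p.2) ∈ A then 1 else 0)
    _ = ∑ x : G2, ∑ y : G2, (A3 A i x y).card :=
        Finset.sum_congr rfl fun x _ => Finset.sum_congr rfl fun y _ => hxy x y
    _ = epsi A i + lvA A i := by
        rw [epsi, lvA, ← Finset.sum_add_distrib]
        refine Finset.sum_congr rfl fun x _ => ?_
        rw [A2card_eq_sum_min, ← Finset.sum_add_distrib]
        refine Finset.sum_congr rfl fun y _ => ?_
        omega

end Count

theorem stmt_15 (m : ℕ) [NeZero m] (hm : 4 ≤ m)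
    (A : Finset (HVtx m))
    (hA : ∀ e : Finset (HVtx m), IsHmEdge e → ¬ e ⊆ A) :
    A.card ≤ 2 * m + ∑ i : ZMod m, (if (A1 A i).Nonempty then 1 else 0) ∧
    A.card ≤ 3 * m ∧
    ∀ S : Finset (ZMod m), (∀ i ∈ S, ∀ v ∈ A, v.1 ≠ i) →
      A.card + S.card ≤ 3 * m := by
  have hcardU : (Finset.univ : Finset (ZMod m)).card = m := by
    rw [Finset.card_univ, ZMod.card]
  -- main bound
  have hmain : A.card ≤ 2 * m + ∑ i : ZMod m, lvN A i := by
    have h1 : A.card ≤ ∑ i : ZMod m, (epsi A i + (lvN A i + lvU A i + lvV A i)) := by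
      rw [count_levels]
      exact Finset.sum_le_sum fun i _ => by
        have := lev_bound hA i; omega
    have h2 : ∑ i : ZMod m, (epsi A i + (lvN A i + lvU A i + lvV A i))
        = (∑ i : ZMod m, lvN A i) + ((∑ i : ZMod m, lvU A i) + (∑ i : ZMod m, lvV A i)
            + (∑ i : ZMod m, epsi A i)) := by
      simp only [← Finset.sum_add_distrib]
      exact Finset.sum_congr rfl fun i _ => by ring
    have hU : ∑ i : ZMod m, lvU A i = ∑ i : ZMod m, lvU A (i + 2) :=
      (Fintype.sum_equiv (Equiv.addRight (2 : ZMod m)) (fun i => lvU A (i + 2)) (lvU A)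
        (fun i => rfl)).symm
    have hV : ∑ i : ZMod m, lvV A i = ∑ i : ZMod m, lvV A (i + 3) :=
      (Fintype.sum_equiv (Equiv.addRight (3 : ZMod m)) (fun i => lvV A (i + 3)) (lvV A)
        (fun i => rfl)).symm
    have h3 : (∑ i : ZMod m, lvU A i) + (∑ i : ZMod m, lvV A i) + (∑ i : ZMod m, epsi A i)
        = ∑ i : ZMod m, (lvU A (i + 2) + lvV A (i + 3) + epsi A i) := by
      rw [hU, hV]
      simp only [← Finset.sum_add_distrib]
    have h4 : ∑ i : ZMod m, (lvU A (i + 2) + lvV A (i + 3) + epsi A i) ≤ 2 * m := by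
      calc ∑ i : ZMod m, (lvU A (i + 2) + lvV A (i + 3) + epsi A i)
          ≤ ∑ _i : ZMod m, 2 := Finset.sum_le_sum fun i _ => window hA hm i
        _ = 2 * m := by rw [Finset.sum_const, hcardU]; ring
    omega
  refine ⟨hmain, ?_, ?_⟩
  · have : ∑ i : ZMod m, lvN A i ≤ m := by
      calc ∑ i : ZMod m, lvN A i ≤ ∑ _i : ZMod m, 1 :=
            Finset.sum_le_sum fun i _ => by rw [lvN]; split <;> omega
        _ = m := by rw [Finset.sum_const, hcardU]; ring
    omega
  · intro S hS
    have hSsub : S ⊆ Finset.univ := Finset.subset_univ S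
    have hSzero : ∀ i ∈ S, lvN A i = 0 := by
      intro i hi
      rw [lvN, if_neg]
      rintro ⟨x, hx⟩
      obtain ⟨y, z, hmem⟩ := mem_A1'.mp hx
      exact hS i hi _ hmem rfl
    have hsplit : ∑ i ∈ Finset.univ \ S, lvN A i + ∑ i ∈ S, lvN A i
        = ∑ i : ZMod m, lvN A i := Finset.sum_sdiff hSsub
    have hzero : ∑ i ∈ S, lvN A i = 0 := Finset.sum_eq_zero hSzero
    have hbound : ∑ i ∈ Finset.univ \ S, lvN A i ≤ m - S.card := by
      calc ∑ i ∈ Finset.univ \ S, lvN A i ≤ ∑ _i ∈ Finset.univ \ S, 1 :=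
            Finset.sum_le_sum fun i _ => by rw [lvN]; split <;> omega
        _ = (Finset.univ \ S).card := by rw [Finset.sum_const]; ring
        _ = m - S.card := by rw [Finset.card_sdiff_of_subset hSsub, hcardU]
    have hScard : S.card ≤ m := by
      have := Finset.card_le_card hSsub
      rw [hcardU] at this
      exact this
    omega
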